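/- (Descent transfer for base-ω exponentiation of linear orders.) Let Λ be a linear order (or quasi-linear order) and consider the ordered set O(0,Λ) of formal sums ω^{λ₀} + ⋯ + ω^{λ_n} with λ₀ ≥ ⋯ ≥ λ_n in Λ, ordered by the usual comparison of Cantor normal forms. If O(0,Λ) admits an infinite strictly descending sequence, then Λ admits an infinite strictly descending sequence. Equivalently: if Λ is well-founded, then O(0,Λ) is well-founded. -/

import Mathlib

section Aux

variable {Λ : Type*} [LinearOrder Λ]

/-- Auxiliary relation on plain lists: the smaller one must be a chain. -/
private def obase (l₁ l₂ : List Λ) : Prop :=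
  l₁.Chain' (· ≥ ·) ∧ List.Lex (· < ·) l₁ l₂

private lemma acc_nil : Acc (obase (Λ := Λ)) [] := by
  constructor
  rintro l ⟨-, hlex⟩
  cases hlex

private lemma chain'_le {b : Λ} {t : List Λ} (h : (b :: t).Chain' (· ≥ ·)) :
    ∀ x ∈ t, x ≤ b := by
  have := List.isChain_iff_pairwise.mp h
  exact fun x hx => (List.pairwise_cons.mp this).1 x hx

private lemma key (hwf : WellFounded ((· < ·) : Λ → Λ → Prop)) :
    ∀ b : Λ, ∀ t : List Λ, Acc obase t → (b :: t).Chain' (· ≥ ·) →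
      Acc obase (b :: t) := by
  intro b
  induction b using hwf.induction with
  | _ b IH1 =>
    -- every chain all of whose elements are `< b` is accessible
    have Q : ∀ l : List Λ, l.Chain' (· ≥ ·) → (∀ x ∈ l, x < b) → Acc obase l := by
      intro l
      induction l with
      | nil => exact fun _ _ => acc_nil
      | cons c t ih =>
        intro hchain hlt
        have htacc : Acc obase t :=
          ih hchain.tail fun x hx =>
            lt_of_le_of_lt (chain'_le hchain x hx) (hlt c (List.mem_cons_self))
        exact IH1 c (hlt c (List.mem_cons_self)) t htacc hchain
    intro t hacct
    induction hacct with
    | intro t _ IH2 =>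
      intro hchain
      constructor
      rintro l' ⟨hl'chain, hlex⟩
      cases hlex with
      | nil => exact acc_nil
      | cons h =>
        exact IH2 _ ⟨hl'chain.tail, h⟩ hl'chain
      | rel h =>
        refine Q _ hl'chain ?_
        rintro x hx
        rcases List.mem_cons.mp hx with rfl | hx
        · exact h
        · exact lt_of_le_of_lt (chain'_le hl'chain x hx) h

private lemma acc_all (hwf : WellFounded ((· < ·) : Λ → Λ → Prop)) :
    ∀ l : List Λ, l.Chain' (· ≥ ·) → Acc obase l := by
  intro l
  induction l with
  | nil => exact fun _ => acc_nil
  | cons b t ih => exact fun h => key hwf b t (ih h.tail) h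

private lemma wf_O (hwf : WellFounded ((· < ·) : Λ → Λ → Prop)) :
    WellFounded (fun a b : {l : List Λ // l.Chain' (· ≥ ·)} =>
      List.Lex (· < ·) a.1 b.1) := by
  have main : ∀ l : List Λ, Acc obase l → ∀ hl : l.Chain' (· ≥ ·),
      Acc (fun a b : {l : List Λ // l.Chain' (· ≥ ·)} =>
        List.Lex (· < ·) a.1 b.1) ⟨l, hl⟩ := by
    intro l h
    induction h with
    | intro l _ IH =>
      intro hl
      constructor
      rintro ⟨l', hl'⟩ hlex
      exact IH l' ⟨hl', hlex⟩ hl'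
  exact ⟨fun x => main x.1 (acc_all hwf x.1 x.2) x.2⟩

private lemma no_desc {α : Type*} {r : α → α → Prop} (h : WellFounded r)
    (f : ℕ → α) (hf : ∀ n, r (f (n + 1)) (f n)) : False := by
  have key : ∀ a, Acc r a → ∀ n, f n = a → False := by
    intro a ha
    induction ha with
    | intro a _ IH => exact fun n hn => IH (f (n + 1)) (hn ▸ hf n) (n + 1) rfl
  exact key (f 0) (h.apply _) 0 rfl

end Aux

/-- Descent transfer for base-ω exponentiation of linear orders: `O(0,Λ)` is the
set of formal sums `ω^{λ₀} + ⋯ + ω^{λ_n}` with `λ₀ ≥ ⋯ ≥ λ_n`, i.e. weakly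
decreasing finite lists from `Λ`, ordered as Cantor normal forms (lexicographically,
a proper initial segment being smaller). If `O(0,Λ)` has an infinite strictly
descending sequence then so does `Λ`; equivalently, if `Λ` is well-founded then
so is `O(0,Λ)`. -/
theorem descent_transfer {Λ : Type*} [LinearOrder Λ] :
    ((∃ f : ℕ → {l : List Λ // l.Chain' (· ≥ ·)},
        ∀ n, List.Lex (· < ·) (f (n + 1)).1 (f n).1) →
      ∃ g : ℕ → Λ, ∀ n, g (n + 1) < g n) ∧
    (WellFounded ((· < ·) : Λ → Λ → Prop) →
      WellFounded (fun a b : {l : List Λ // l.Chain' (· ≥ ·)} =>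
        List.Lex (· < ·) a.1 b.1)) := by
  refine ⟨?_, wf_O⟩
  rintro ⟨f, hf⟩
  by_cases hwf : WellFounded ((· < ·) : Λ → Λ → Prop)
  · exact absurd hf (fun h => no_desc (wf_O hwf) f h)
  · rw [RelEmbedding.wellFounded_iff_isEmpty, not_isEmpty_iff] at hwf
    obtain ⟨e⟩ := hwf
    exact ⟨e, fun n => e.map_rel_iff.mpr (Nat.lt_succ_self n)⟩
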